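/- Relaxed Supermartingale Rule (Theorem 5, second part): Let (M_n)_{n∈ℕ} be an adapted, integrable real-valued process on a filtered probability space with M_n ≥ 0 P-almost surely for every n, and let T be a stopping time. Suppose there are constants p ∈ (0,1], d > 0 and an index i₀ ∈ ℕ such that for every n ≥ i₀, P-almost everywhere on {T > n}: (i) M_n > 0; (ii) P(M_{n+1} − M_n ≤ −d | ℱ_n) ≥ p; and (iii) E(M_{n+1} | ℱ_n) ≤ M_n. Then P(T < ∞) = 1 (almost sure termination). -/

import Mathlib

open MeasureTheory Filter
open scoped ENNReal Topology

section RSRAux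

variable {Ω : Type*}

/-- Auxiliary: the sets of a drop of size at least `d`. -/
def rsrDrop (M : ℕ → Ω → ℝ) (d : ℝ) : ℕ → Set Ω
  | 0 => ∅
  | n + 1 => {ω | M (n + 1) ω - M n ω ≤ -d}

/-- Auxiliary: the stopped process, shifted by `i₀`. -/
def rsrY (M : ℕ → Ω → ℝ) (T : Ω → ℕ∞) (i₀ : ℕ) : ℕ → Ω → ℝ
  | 0 => M i₀
  | n + 1 => fun ω => if ((i₀ + n : ℕ) : ℕ∞) < T ω then M (i₀ + n + 1) ω else
      rsrY M T i₀ n ω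

lemma rsrY_eq (M : ℕ → Ω → ℝ) (T : Ω → ℕ∞) (i₀ : ℕ) :
    ∀ n (ω : Ω), ((i₀ + n : ℕ) : ℕ∞) ≤ T ω → rsrY M T i₀ n ω = M (i₀ + n) ω
  | 0, ω, _ => rfl
  | n + 1, ω, h => by
    have hlt : ((i₀ + n : ℕ) : ℕ∞) < T ω :=
      lt_of_lt_of_le (by exact_mod_cast Nat.lt_succ_self (i₀ + n)) h
    simp only [rsrY, if_pos hlt]
    rw [Nat.add_assoc]

lemma rsrY_succ_eq (M : ℕ → Ω → ℝ) (T : Ω → ℕ∞) (i₀ n : ℕ) :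
    rsrY M T i₀ (n + 1) =
      Set.indicator {ω | ((i₀ + n : ℕ) : ℕ∞) < T ω} (M (i₀ + n + 1)) +
      Set.indicator {ω | ((i₀ + n : ℕ) : ℕ∞) < T ω}ᶜ (rsrY M T i₀ n) := by
  funext ω
  show (if ((i₀ + n : ℕ) : ℕ∞) < T ω then M (i₀ + n + 1) ω else rsrY M T i₀ n ω) = _
  by_cases h : ((i₀ + n : ℕ) : ℕ∞) < T ω
  · rw [if_pos h, Pi.add_apply,
      Set.indicator_of_mem (show ω ∈ {ω | ((i₀ + n : ℕ) : ℕ∞) < T ω} from h),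
      Set.indicator_of_notMem
        (show ω ∉ {ω | ((i₀ + n : ℕ) : ℕ∞) < T ω}ᶜ from fun hc => hc h), add_zero]
  · rw [if_neg h, Pi.add_apply,
      Set.indicator_of_notMem (show ω ∉ {ω | ((i₀ + n : ℕ) : ℕ∞) < T ω} from h),
      Set.indicator_of_mem (show ω ∈ {ω | ((i₀ + n : ℕ) : ℕ∞) < T ω}ᶜ from h), zero_add]

end RSRAux

/-- **Relaxed Supermartingale Rule.** If `(M n)` is an adapted integrable a.s. nonnegative
process, `T` a stopping time, and there are constants `p ∈ (0,1]`, `d > 0` and an index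
`i₀ ∈ ℕ` such that for every `n ≥ i₀`, a.e. on `{T > n}` the process is positive,
decreases by at least `d` with conditional probability at least `p`, and is a
supermartingale, then `P(T < ∞) = 1` (almost sure termination). -/
theorem relaxed_supermartingale_rule
    {Ω : Type*} {mΩ : MeasurableSpace Ω} {P : Measure Ω} [IsProbabilityMeasure P]
    (ℱ : Filtration ℕ mΩ) (M : ℕ → Ω → ℝ) (T : Ω → ℕ∞)
    (hAdapted : Adapted ℱ M) (hInt : ∀ n, Integrable (M n) P)
    (hNonneg : ∀ n : ℕ, ∀ᵐ ω ∂P, 0 ≤ M n ω)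
    (hStop : ∀ n : ℕ, MeasurableSet[ℱ n] {ω | T ω ≤ (n : ℕ∞)})
    (p d : ℝ) (hp0 : 0 < p) (hp1 : p ≤ 1) (hd : 0 < d) (i₀ : ℕ)
    (hPos : ∀ n : ℕ, i₀ ≤ n → ∀ᵐ ω ∂P, (n : ℕ∞) < T ω → 0 < M n ω)
    (hDec : ∀ n : ℕ, i₀ ≤ n → ∀ᵐ ω ∂P, (n : ℕ∞) < T ω →
      p ≤ (P[Set.indicator {ω' | M (n + 1) ω' - M n ω' ≤ -d} (fun _ => (1 : ℝ))|ℱ n]) ω)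
    (hSM : ∀ n : ℕ, i₀ ≤ n → ∀ᵐ ω ∂P, (n : ℕ∞) < T ω →
      (P[M (n + 1)|ℱ n]) ω ≤ M n ω) :
    P {ω | T ω < ⊤} = 1 := by
  classical
  -- the drop sets
  set A : ℕ → Set Ω := rsrDrop M d with hA_def
  have hA : ∀ n, MeasurableSet[ℱ n] (A n) := by
    intro n
    match n with
    | 0 => exact @MeasurableSet.empty _ (ℱ 0)
    | n + 1 =>
      have hm : Measurable[ℱ (n + 1)] fun ω => M (n + 1) ω - M n ω :=
        (hAdapted (n + 1)).sub
          (((hAdapted n)).mono (ℱ.mono (Nat.le_succ n)) le_rfl)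
      exact measurableSet_le hm measurable_const
  -- the shifted filtration
  set G : Filtration ℕ mΩ :=
    ⟨fun n => ℱ (i₀ + n), fun _ _ h => ℱ.mono (by omega), fun n => ℱ.le _⟩ with hG_def
  -- the stopped shifted process
  set Y : ℕ → Ω → ℝ := rsrY M T i₀ with hY_def
  -- measurability of the continuation sets
  have hSmeas : ∀ n : ℕ, MeasurableSet[ℱ n] {ω | (n : ℕ∞) < T ω} := by
    intro n
    have : {ω | (n : ℕ∞) < T ω} = {ω | T ω ≤ (n : ℕ∞)}ᶜ := by
      ext ω; simp [not_le]
    rw [this]; exact (hStop n).compl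
  -- Y is adapted to G
  have hYadp : Adapted G Y := by
    intro n
    induction n with
    | zero => exact hAdapted i₀
    | succ n ih =>
      rw [hY_def, rsrY_succ_eq]
      have h1 : Measurable[G (n + 1)]
          (Set.indicator {ω | ((i₀ + n : ℕ) : ℕ∞) < T ω} (M (i₀ + n + 1))) :=
        (hAdapted (i₀ + n + 1)).indicator
          ((ℱ.mono (Nat.le_succ (i₀ + n))) _ (hSmeas (i₀ + n)))
      have h2 : Measurable[G (n + 1)]
          (Set.indicator {ω | ((i₀ + n : ℕ) : ℕ∞) < T ω}ᶜ (Y n)) :=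
        (ih.mono (ℱ.mono (Nat.le_succ (i₀ + n))) le_rfl).indicator
          ((ℱ.mono (Nat.le_succ (i₀ + n))) _ (hSmeas (i₀ + n)).compl)
      exact h1.add h2
  -- Y is integrable
  have hYint : ∀ n, Integrable (Y n) P := by
    intro n
    induction n with
    | zero => exact hInt i₀
    | succ n ih =>
      rw [hY_def, rsrY_succ_eq]
      exact ((hInt (i₀ + n + 1)).indicator (ℱ.le _ _ (hSmeas (i₀ + n)))).add
        (ih.indicator (ℱ.le _ _ (hSmeas (i₀ + n)).compl))
  -- Y is a supermartingale
  have hkey : ∀ n, P[Y (n + 1)|G n] ≤ᵐ[P] Y n := by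
    intro n
    have hs : MeasurableSet[ℱ (i₀ + n)] {ω | ((i₀ + n : ℕ) : ℕ∞) < T ω} := hSmeas (i₀ + n)
    have hrw : Y (n + 1) =
        Set.indicator {ω | ((i₀ + n : ℕ) : ℕ∞) < T ω} (M (i₀ + n + 1)) +
        Set.indicator {ω | ((i₀ + n : ℕ) : ℕ∞) < T ω}ᶜ (Y n) := rsrY_succ_eq M T i₀ n
    have hadd := condExp_add (m := ℱ (i₀ + n)) (μ := P)
      ((hInt (i₀ + n + 1)).indicator (ℱ.le _ _ hs))
      ((hYint n).indicator (ℱ.le _ _ hs.compl))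
    have h1 := condExp_indicator (m := ℱ (i₀ + n)) (μ := P) (hInt (i₀ + n + 1)) hs
    have h2 : P[Set.indicator {ω | ((i₀ + n : ℕ) : ℕ∞) < T ω}ᶜ (Y n)|ℱ (i₀ + n)] =
        Set.indicator {ω | ((i₀ + n : ℕ) : ℕ∞) < T ω}ᶜ (Y n) :=
      condExp_of_stronglyMeasurable (ℱ.le _)
        ((hYadp n).indicator hs.compl).stronglyMeasurable ((hYint n).indicator (ℱ.le _ _ hs.compl))
    have hsm := hSM (i₀ + n) (Nat.le_add_right i₀ n)
    calc P[Y (n + 1)|G n] =ᵐ[P]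
        P[Set.indicator {ω | ((i₀ + n : ℕ) : ℕ∞) < T ω} (M (i₀ + n + 1))|ℱ (i₀ + n)] +
        P[Set.indicator {ω | ((i₀ + n : ℕ) : ℕ∞) < T ω}ᶜ (Y n)|ℱ (i₀ + n)] := by
          rw [hrw]; exact hadd
      _ ≤ᵐ[P] Y n := by
          filter_upwards [h1, hsm] with ω hω1 hωsm
          rw [Pi.add_apply, hω1, h2]
          by_cases hω : ((i₀ + n : ℕ) : ℕ∞) < T ω
          · have hYeq : Y n ω = M (i₀ + n) ω := rsrY_eq M T i₀ n ω (le_of_lt hω)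
            rw [Set.indicator_of_mem
                (show ω ∈ {ω | ((i₀ + n : ℕ) : ℕ∞) < T ω} from hω),
              Set.indicator_of_notMem
                (show ω ∉ {ω | ((i₀ + n : ℕ) : ℕ∞) < T ω}ᶜ from fun hc => hc hω),
              add_zero, hYeq]
            exact hωsm hω
          · rw [Set.indicator_of_notMem
                (show ω ∉ {ω | ((i₀ + n : ℕ) : ℕ∞) < T ω} from hω),
              Set.indicator_of_mem
                (show ω ∈ {ω | ((i₀ + n : ℕ) : ℕ∞) < T ω}ᶜ from hω), zero_add]
  have hYsuper : Supermartingale Y G P := supermartingale_nat (fun n => (hYadp n).stronglyMeasurable) hYint hkey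
  -- Y is a.e. nonnegative
  have hYnn : ∀ n, ∀ᵐ ω ∂P, 0 ≤ Y n ω := by
    intro n
    induction n with
    | zero => exact hNonneg i₀
    | succ n ih =>
      filter_upwards [ih, hNonneg (i₀ + n + 1)] with ω h1 h2
      have hrfl : Y (n + 1) ω =
          if ((i₀ + n : ℕ) : ℕ∞) < T ω then M (i₀ + n + 1) ω else Y n ω := rfl
      rw [hrfl]
      split
      · exact h2
      · exact h1
  -- L¹ bound and convergence
  have hEY : ∀ n, ∫ ω, Y n ω ∂P ≤ ∫ ω, Y 0 ω ∂P := by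
    intro n
    have h := hYsuper.2.1 0 n (Nat.zero_le n)
    calc ∫ ω, Y n ω ∂P = ∫ ω, (P[Y n|G 0]) ω ∂P := (integral_condExp (G.le 0)).symm
      _ ≤ ∫ ω, Y 0 ω ∂P := integral_mono_ae integrable_condExp (hYint 0) h
  have hbdd : ∀ n, eLpNorm ((-Y) n) 1 P ≤ (∫ ω, Y 0 ω ∂P).toNNReal := by
    intro n
    have : eLpNorm ((-Y) n) 1 P = eLpNorm (Y n) 1 P := eLpNorm_neg _ _ _
    rw [this, eLpNorm_one_eq_lintegral_enorm,
      ← ofReal_integral_norm_eq_lintegral_enorm (hYint n)]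
    have hnorm : ∫ ω, ‖Y n ω‖ ∂P = ∫ ω, Y n ω ∂P := by
      refine integral_congr_ae ?_
      filter_upwards [hYnn n] with ω hω using Real.norm_of_nonneg hω
    rw [hnorm]
    have : ((∫ ω, Y 0 ω ∂P).toNNReal : ℝ≥0∞) = ENNReal.ofReal (∫ ω, Y 0 ω ∂P) := rfl
    rw [this]
    exact ENNReal.ofReal_le_ofReal (hEY n)
  have hConv : ∀ᵐ ω ∂P, ∃ c, Tendsto (fun n => Y n ω) atTop (𝓝 c) := by
    have h := hYsuper.neg.exists_ae_tendsto_of_bdd hbdd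
    filter_upwards [h] with ω ⟨c, hc⟩
    exact ⟨-c, by simpa using hc.neg⟩
  -- Borel-Cantelli on the drop sets
  have hBC := ae_mem_limsup_atTop_iff P hA
  have hnn : ∀ᵐ ω ∂P, ∀ k : ℕ, 0 ≤ (P[(A (k + 1)).indicator (1 : Ω → ℝ)|ℱ k]) ω := by
    rw [ae_all_iff]
    intro k
    exact condExp_nonneg (Eventually.of_forall fun ω =>
      Set.indicator_nonneg (fun _ _ => zero_le_one) ω)
  have hDec' : ∀ᵐ ω ∂P, ∀ k : ℕ, i₀ ≤ k → (k : ℕ∞) < T ω →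
      p ≤ (P[(A (k + 1)).indicator (1 : Ω → ℝ)|ℱ k]) ω := by
    rw [ae_all_iff]
    intro k
    by_cases hk : i₀ ≤ k
    · filter_upwards [hDec k hk] with ω hω _ hT
      exact hω hT
    · filter_upwards with ω h; exact absurd h hk
  have hfreq : ∀ᵐ ω ∂P, T ω = ⊤ → ∃ᶠ n in atTop, ω ∈ A n := by
    filter_upwards [hBC, hnn, hDec'] with ω hωBC hωnn hωdec hT
    rw [← mem_limsup_iff_frequently_mem]
    refine hωBC.mpr ?_
    set t : ℕ → ℝ := fun k => (P[(A (k + 1)).indicator (1 : Ω → ℝ)|ℱ k]) ω with ht_def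
    have ht : ∀ k, i₀ ≤ k → p ≤ t k := fun k hk => hωdec k hk (by rw [hT]; exact lt_top_iff_ne_top.mpr (by simp))
    refine tendsto_atTop_atTop.mpr fun b => ?_
    obtain ⟨m, hm⟩ := exists_nat_ge (b / p)
    refine ⟨i₀ + m, fun n hn => ?_⟩
    have hb : b ≤ m * p := by
      rw [div_le_iff₀ hp0] at hm; linarith
    have h1 : (m : ℝ) * p ≤ ∑ k ∈ Finset.Ico i₀ (i₀ + m), t k := by
      have := Finset.card_nsmul_le_sum (Finset.Ico i₀ (i₀ + m)) t p
        (fun k hk => ht k (Finset.mem_Ico.mp hk).1)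
      rwa [Nat.card_Ico, Nat.add_sub_cancel_left, nsmul_eq_mul] at this
    have h2 : ∑ k ∈ Finset.Ico i₀ (i₀ + m), t k ≤ ∑ k ∈ Finset.range n, t k := by
      refine Finset.sum_le_sum_of_subset_of_nonneg ?_ (fun k _ _ => hωnn k)
      intro k hk
      rw [Finset.mem_Ico] at hk
      rw [Finset.mem_range]
      omega
    calc b ≤ m * p := hb
      _ ≤ _ := h1.trans h2
  -- combine: a.e. T < ⊤
  have hae : ∀ᵐ ω ∂P, T ω < ⊤ := by
    filter_upwards [hfreq, hConv] with ω h1 h2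
    rw [lt_top_iff_ne_top]
    intro hT
    obtain ⟨c, hc⟩ := h2
    have hYeq : ∀ m, Y m ω = M (i₀ + m) ω := fun m =>
      rsrY_eq M T i₀ m ω (by rw [hT]; exact le_top)
    have hdiff : Tendsto (fun m => Y (m + 1) ω - Y m ω) atTop (𝓝 0) := by
      have := (hc.comp (tendsto_add_atTop_nat 1)).sub hc
      simpa using this
    have hev : ∀ᶠ m in atTop, -d < Y (m + 1) ω - Y m ω :=
      hdiff.eventually (eventually_gt_nhds (by linarith))
    obtain ⟨N, hN⟩ := eventually_atTop.mp hev
    obtain ⟨n, hn, hmem⟩ := frequently_atTop.mp (h1 hT) (i₀ + N + 1)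
    obtain ⟨j, hj1, hj2⟩ : ∃ j, n = i₀ + j + 1 ∧ N ≤ j := ⟨n - i₀ - 1, by omega, by omega⟩
    rw [hj1] at hmem
    have hdrop : M (i₀ + j + 1) ω - M (i₀ + j) ω ≤ -d := by
      have : A (i₀ + j + 1) = {ω' | M (i₀ + j + 1) ω' - M (i₀ + j) ω' ≤ -d} := rfl
      rwa [this] at hmem
    have := hN j hj2
    rw [hYeq (j + 1), hYeq j, ← Nat.add_assoc] at this
    linarith
  -- conclude
  have hmeas : MeasurableSet {ω | T ω < ⊤} := by
    have heq : {ω | T ω < ⊤} = ⋃ n : ℕ, {ω | T ω ≤ (n : ℕ∞)} := by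
      ext ω
      simp only [Set.mem_setOf_eq, Set.mem_iUnion, lt_top_iff_ne_top]
      constructor
      · intro h
        obtain ⟨m, hm⟩ := WithTop.ne_top_iff_exists.mp h
        exact ⟨m, hm.ge⟩
      · rintro ⟨n, hn⟩
        exact (lt_of_le_of_lt hn (WithTop.coe_lt_top n)).ne
    rw [heq]
    exact MeasurableSet.iUnion fun n => ℱ.le n _ (hStop n)
  rw [← prob_compl_eq_zero_iff hmeas]
  have : {ω | T ω < ⊤}ᶜ = {ω | ¬ T ω < ⊤} := rfl
  rw [this]
  exact ae_iff.mp hae
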